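/- Let μ be an F-linear derivation of Z such that [μ,δ] = μδ − δμ = 2aδ for some a ∈ Z. Then there is a unique even derivation μ̌ of the Kantor double superalgebra K = Z ⊕ Zx with μ̌|_Z = μ and μ̌(x) = ax (so μ̌(fx) = (μ(f) + af)x for f ∈ Z). Conversely, for every even derivation γ of K, the restriction μ = γ|_Z is a derivation of Z with [μ,δ] ∈ Zδ and γ = μ̌. Moreover, the assignment μ ↦ μ̌ is an isomorphism of Lie algebras from {μ ∈ Der_F(Z) : [μ,δ] ∈ Zδ} onto Der(K)₀. -/

import Mathlib

namespace CKJ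

variable (F : Type*) [Field F] {Z : Type*} [CommRing Z] [Algebra F Z]

/-- Underlying module of the Cheng–Kac Jordan superalgebra `JCK(Z,δ)`:
the even part has `Z`-coordinates `1, w₁, w₂, w₃` (indices `0,1,2,3`) and the
odd part has `Z`-coordinates `x, x₁, x₂, x₃` (indices `0,1,2,3`). -/
abbrev J (Z : Type*) := (Fin 4 → Z) × (Fin 4 → Z)

/-- The product of two even elements, in coordinates:
`w₁² = w₂² = 1`, `w₃² = -1`, `wᵢwⱼ = 0` for `i ≠ j`. -/
def emul (a c : Fin 4 → Z) : Fin 4 → Z :=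
  ![a 0 * c 0 + a 1 * c 1 + a 2 * c 2 - a 3 * c 3,
    a 0 * c 1 + a 1 * c 0,
    a 0 * c 2 + a 2 * c 0,
    a 0 * c 3 + a 3 * c 0]

/-- The product of two odd elements: `(fx)(gx) = δ(f)g - fδ(g)`,
`(fxᵢ)(gx) = (fg)wᵢ`, `(fx)(gxⱼ) = -(fg)wⱼ`, `(fxᵢ)(gxⱼ) = 0`. -/
def omul (δ : Z → Z) (b d : Fin 4 → Z) : Fin 4 → Z :=
  ![δ (b 0) * d 0 - b 0 * δ (d 0),
    b 1 * d 0 - b 0 * d 1,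
    b 2 * d 0 - b 0 * d 2,
    b 3 * d 0 - b 0 * d 3]

/-- The product of an even element by an odd element: `f(gx) = (fg)x`,
`f(gxⱼ) = (fg)xⱼ`, `(fwᵢ)(gx) = (δ(f)g)xᵢ`, `(fwᵢ)(gxⱼ) = -(fg)x_{i×j}`. -/
def eomul (δ : Z → Z) (a d : Fin 4 → Z) : Fin 4 → Z :=
  ![a 0 * d 0,
    a 0 * d 1 + δ (a 1) * d 0 + (a 2 * d 3 - a 3 * d 2),
    a 0 * d 2 + δ (a 2) * d 0 + (a 3 * d 1 - a 1 * d 3),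
    a 0 * d 3 + δ (a 3) * d 0 + (a 2 * d 1 - a 1 * d 2)]

/-- The (supercommutative) multiplication of the Cheng–Kac Jordan
superalgebra `JCK(Z,δ)`. -/
def jmul (δ : Z → Z) (u v : J Z) : J Z :=
  (emul u.1 v.1 + omul δ u.2 v.2, eomul δ u.1 v.2 + eomul δ v.1 u.2)

/-- `fw f k` is the even element `f·wₖ` (with the convention `w₀ = 1`). -/
def fw (f : Z) (k : Fin 4) : J Z := (fun j => if j = k then f else 0, 0)

/-- `fone f` is the even element `f·1`. -/
def fone (f : Z) : J Z := fw f 0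

/-- `fxi f k` is the odd element `f·xₖ` (with the convention `x₀ = x`). -/
def fxi (f : Z) (k : Fin 4) : J Z := (0, fun j => if j = k then f else 0)

/-- `fx f` is the odd element `f·x`. -/
def fx (f : Z) : J Z := fxi f 0

/-- The grading involution of the superalgebra `J` (identity on the even part,
minus the identity on the odd part). -/
def jsig (u : J Z) : J Z := (u.1, -u.2)

/-- `F`-linearity of a map `J → J`. -/
def IsLin (d : J Z → J Z) : Prop :=
  (∀ u v, d (u + v) = d u + d v) ∧ ∀ (c : F) (u), d (c • u) = c • d u

/-- `d` is an even derivation of the superalgebra `J = JCK(Z,δ)`. -/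
def IsDer0 (δ : Z → Z) (d : J Z → J Z) : Prop :=
  IsLin F d ∧ (∀ u : J Z, u.2 = 0 → (d u).2 = 0) ∧ (∀ u : J Z, u.1 = 0 → (d u).1 = 0) ∧
    ∀ u v, d (jmul δ u v) = jmul δ (d u) v + jmul δ u (d v)

/-- `d` is an odd derivation of the superalgebra `J = JCK(Z,δ)`. -/
def IsDer1 (δ : Z → Z) (d : J Z → J Z) : Prop :=
  IsLin F d ∧ (∀ u : J Z, u.2 = 0 → (d u).1 = 0) ∧ (∀ u : J Z, u.1 = 0 → (d u).2 = 0) ∧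
    ∀ u v, d (jmul δ u v) = jmul δ (d u) v + jmul δ (jsig u) (d v)

/-- The set `Der(J) = Der(J)₀ ⊕ Der(J)₁` of all derivations of `J`. -/
def DerJSet (δ : Z → Z) : Set (J Z → J Z) :=
  {d | ∃ d0 d1, IsDer0 F δ d0 ∧ IsDer1 F δ d1 ∧ d = d0 + d1}

/-- `u` is homogeneous of parity `p` (`p = true` means odd). -/
def IsHom (p : Bool) (u : J Z) : Prop := if p then u.1 = 0 else u.2 = 0

/-- `(-1)^{pq}` -/
def sgn (p q : Bool) : ℤ := if p && q then -1 else 1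

/-- `Dgen δ ε u v` is the inner derivation `D(u,v) : c ↦ u(vc) - ε·v(uc)`;
for homogeneous `u`, `v` one takes `ε = (-1)^{|u||v|}`. -/
def Dgen (δ : Z → Z) (ε : ℤ) (u v : J Z) : J Z → J Z :=
  fun c => jmul δ u (jmul δ v c) - ε • jmul δ v (jmul δ u c)

/-- Generators `D(u,v)`, `u`, `v` homogeneous, of `Inder(J)`. -/
def InderSet (δ : Z → Z) : Set (J Z → J Z) :=
  {d | ∃ u v p q, IsHom p u ∧ IsHom q v ∧ d = Dgen δ (sgn p q) u v}

/-- Generators of the even part `Inder(J)₀`. -/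
def InderSet0 (δ : Z → Z) : Set (J Z → J Z) :=
  {d | ∃ u v p, IsHom p u ∧ IsHom p v ∧ d = Dgen δ (sgn p p) u v}

/-- Generators of the odd part `Inder(J)₁`. -/
def InderSet1 (δ : Z → Z) : Set (J Z → J Z) :=
  {d | ∃ u v p, IsHom p u ∧ IsHom (!p) v ∧ d = Dgen δ 1 u v}

/-- Coordinate index of each sector of the `ℤ₂×ℤ₂`-grading:
`[0,0] ↦ 0`, `[1,0] ↦ 1`, `[0,1] ↦ 2`, `[1,1] ↦ 3`. -/
def idx (t : ZMod 2 × ZMod 2) : Fin 4 :=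
  if t = (0, 0) then 0 else if t = (1, 0) then 1 else if t = (0, 1) then 2 else 3

/-- The sector `J^{[t]}` of the `ℤ₂×ℤ₂`-grading of `J`:
`J^{[0,0]} = Z ⊕ Zx`, `J^{[1,0]} = Zw₁ ⊕ Zx₁`, `J^{[0,1]} = Zw₂ ⊕ Zx₂`,
`J^{[1,1]} = Zw₃ ⊕ Zx₃`. -/
def gset (t : ZMod 2 × ZMod 2) : Set (J Z) :=
  {u | ∀ k : Fin 4, k ≠ idx t → u.1 k = 0 ∧ u.2 k = 0}

/-- `d : J → J` has degree `t` with respect to the `ℤ₂×ℤ₂`-grading of `J`. -/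
def DerDeg (t : ZMod 2 × ZMod 2) (d : J Z → J Z) : Prop :=
  ∀ s u, u ∈ gset s → d u ∈ gset (s + t)

/-! The Kantor double superalgebra of vector type `K = Z ⊕ Zx`, realised
as `Z × Z`: the pair `(f, g)` represents `f + gx`. -/

/-- The multiplication of `K = Z ⊕ Zx`. -/
def kmul (δ : Z → Z) (u v : Z × Z) : Z × Z :=
  (u.1 * v.1 + (δ u.2 * v.2 - u.2 * δ v.2), u.1 * v.2 + v.1 * u.2)

/-- The grading involution of `K`. -/
def ksig (u : Z × Z) : Z × Z := (u.1, -u.2)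

/-- `F`-linearity of a map `K → K`. -/
def IsKLin (d : Z × Z → Z × Z) : Prop :=
  (∀ u v, d (u + v) = d u + d v) ∧ ∀ (c : F) (u), d (c • u) = c • d u

/-- `d` is an even derivation of `K = Z ⊕ Zx`. -/
def IsKDer0 (δ : Z → Z) (d : Z × Z → Z × Z) : Prop :=
  IsKLin F d ∧ (∀ u : Z × Z, u.2 = 0 → (d u).2 = 0) ∧ (∀ u : Z × Z, u.1 = 0 → (d u).1 = 0) ∧
    ∀ u v, d (kmul δ u v) = kmul δ (d u) v + kmul δ u (d v)

/-- `d` is an odd derivation of `K = Z ⊕ Zx`. -/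
def IsKDer1 (δ : Z → Z) (d : Z × Z → Z × Z) : Prop :=
  IsKLin F d ∧ (∀ u : Z × Z, u.2 = 0 → (d u).1 = 0) ∧ (∀ u : Z × Z, u.1 = 0 → (d u).2 = 0) ∧
    ∀ u v, d (kmul δ u v) = kmul δ (d u) v + kmul δ (ksig u) (d v)

/-- `Dk δ ε u v` is the inner derivation `D(u,v) : c ↦ u(vc) - ε·v(uc)` of `K`. -/
def Dk (δ : Z → Z) (ε : ℤ) (u v : Z × Z) : Z × Z → Z × Z :=
  fun c => kmul δ u (kmul δ v c) - ε • kmul δ v (kmul δ u c)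

/-- `u ∈ K` is homogeneous of parity `p`. -/
def KHom (p : Bool) (u : Z × Z) : Prop := if p then u.1 = 0 else u.2 = 0

/-- Generators `D(u,v)`, `u`, `v` homogeneous, of `Inder(K)`. -/
def InderKSet (δ : Z → Z) : Set (Z × Z → Z × Z) :=
  {d | ∃ u v p q, KHom p u ∧ KHom q v ∧ d = Dk δ (sgn p q) u v}

/-- Generators of the even part `Inder(K)₀`. -/
def InderKSet0 (δ : Z → Z) : Set (Z × Z → Z × Z) :=
  {d | ∃ u v p, KHom p u ∧ KHom p v ∧ d = Dk δ (sgn p p) u v}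

/-- Generators of the odd part `Inder(K)₁`. -/
def InderKSet1 (δ : Z → Z) : Set (Z × Z → Z × Z) :=
  {d | ∃ u v p, KHom p u ∧ KHom (!p) v ∧ d = Dk δ 1 u v}

/-- The odd derivation `η_a` of `K`: `η_a(f) = 0`, `η_a(fx) = fa`. -/
def keta (a : Z) : Z × Z → Z × Z := fun u => (a * u.2, 0)

/-- `kcheck μ a` is the even map `μ̌` of `K` with `μ̌(f) = μ(f)` and
`μ̌(gx) = (μ(g) + ag)x`. -/
def kcheck (μ : Z → Z) (a : Z) : Z × Z → Z × Z := fun u => (μ u.1, μ u.2 + a * u.2)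

/-- The odd map `(aδ)⁻` of `K` (relevant in characteristic 3):
`(aδ)⁻(f) = (aδ(f))x`, `(aδ)⁻(fx) = δ(aδ(f))`. -/
def kminus (δ : Z → Z) (a : Z) : Z × Z → Z × Z := fun u => (δ (a * δ u.2), a * δ u.1)

/-- `D̄er(K) = Der(K)₀ ⊕ {η_a : a ∈ Z}`. -/
def DerbarK (δ : Z → Z) : Set (Z × Z → Z × Z) :=
  {e | ∃ e0 a, IsKDer0 F δ e0 ∧ e = e0 + keta a}

/-- The extension `∂̃` to `J` of the even derivation `∂ = μ̌ = kcheck μ a`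
of `K`: `∂̃|_K = ∂`, `∂̃(fwᵢ) = μ(f)wᵢ`, `∂̃(fxᵢ) = (μ(f) - af)xᵢ`. -/
def jtilde (μ : Z → Z) (a : Z) : J Z → J Z :=
  fun u => (fun k => μ (u.1 k),
    fun k => if k = 0 then μ (u.2 0) + a * u.2 0 else μ (u.2 k) - a * u.2 k)

/-- The odd derivation `η̃_a` of `J`: `η̃_a(Z) = 0`, `η̃_a(x) = a`,
`η̃_a(xⱼ) = 0` (hence `η̃_a(fwᵢ) = -(af)xᵢ`). -/
def jeta (a : Z) : J Z → J Z :=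
  fun u => (fun k => if k = 0 then a * u.2 0 else 0,
            fun k => if k = 0 then 0 else -(a * u.1 k))

/-- The even component of an endomorphism of `J`. -/
def evp (X : J Z → J Z) : J Z → J Z := fun u => (2 : F)⁻¹ • (X u + jsig (X (jsig u)))

/-- The odd component of an endomorphism of `J`. -/
def odp (X : J Z → J Z) : J Z → J Z := fun u => (2 : F)⁻¹ • (X u - jsig (X (jsig u)))

/-- The supercommutator `[X,Y]` in `End_F(J)`. -/
def sbr (X Y : J Z → J Z) : J Z → J Z :=
  X ∘ Y - Y ∘ X + (2 : F) • (odp F Y ∘ odp F X)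

/-- The odd component of an endomorphism of `K`. -/
def kodp (e : Z × Z → Z × Z) : Z × Z → Z × Z :=
  fun u => (2 : F)⁻¹ • (e u - ksig (e (ksig u)))

/-- The supercommutator `[e,e']` in `End_F(K)`. -/
def ksbr (e e' : Z × Z → Z × Z) : Z × Z → Z × Z :=
  e ∘ e' - e' ∘ e + (2 : F) • (kodp F e' ∘ kodp F e)

/-- The automorphism `τ₁ = (12)(34)`: identity on `J^{[0,0]} ⊕ J^{[1,1]}`,
`-1` on `J^{[1,0]} ⊕ J^{[0,1]}`. -/
def tau1Map : J Z → J Z :=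
  fun u => (![u.1 0, -u.1 1, -u.1 2, u.1 3], ![u.2 0, -u.2 1, -u.2 2, u.2 3])

/-- The automorphism `τ₂ = (23)(41)`: identity on `J^{[0,0]} ⊕ J^{[1,0]}`,
`-1` on `J^{[0,1]} ⊕ J^{[1,1]}`. -/
def tau2Map : J Z → J Z :=
  fun u => (![u.1 0, u.1 1, -u.1 2, -u.1 3], ![u.2 0, u.2 1, -u.2 2, -u.2 3])

/-- The automorphism `φ = (123)`: the `Z`-linear map with `φ(vⱼ) = vⱼ₊₁`,
`φ(yⱼ) = yⱼ₊₁` (indices mod 3), `φ(1) = 1`, `φ(y) = y`, where `v₁ = i·w₁`,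
`v₂ = i·w₂`, `v₃ = w₃`, `y = x`, `y₁ = i·x₁`, `y₂ = i·x₂`, `y₃ = x₃`.
In the `w`/`x` coordinates: `w₁ ↦ w₂ ↦ -i·w₃`, `w₃ ↦ i·w₁`,
`x₁ ↦ x₂ ↦ -i·x₃`, `x₃ ↦ i·x₁`. -/
def phiMap (i : F) : J Z → J Z :=
  fun u => (![u.1 0, algebraMap F Z i * u.1 3, u.1 1, -(algebraMap F Z i * u.1 2)],
            ![u.2 0, algebraMap F Z i * u.2 3, u.2 1, -(algebraMap F Z i * u.2 2)])

/-- The automorphism `τ = (12)`: `Z`-linear with `τ(1) = 1`, `τ(y) = y`,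
`τ(v₁) = -v₂`, `τ(v₂) = -v₁`, `τ(v₃) = -v₃`, `τ(y₁) = -y₂`, `τ(y₂) = -y₁`,
`τ(y₃) = -y₃`. -/
def tauMap : J Z → J Z :=
  fun u => (![u.1 0, -u.1 2, -u.1 1, -u.1 3], ![u.2 0, -u.2 2, -u.2 1, -u.2 3])

/-- `g` is an `F`-algebra automorphism of `J = JCK(Z,δ)`. -/
def IsJAut (δ : Z → Z) (g : J Z → J Z) : Prop :=
  IsLin F g ∧ Function.Bijective g ∧ ∀ u v, g (jmul δ u v) = jmul δ (g u) (g v)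

/-- The coordinatization map `Φ : K → Der(J)^{[1,1]}`,
`Φ(f + gy) = D(v₁, f·v₂) + i·D(v₃, g·y)`. -/
def Phi (δ : Z → Z) (i : F) (p : Z × Z) : J Z → J Z :=
  Dgen δ 1 (fw (algebraMap F Z i) 1) (fw (p.1 * algebraMap F Z i) 2) +
    i • Dgen δ 1 (fw (1 : Z) 3) (fx p.2)

/-- `ι₁(z) = φ ∘ Φ(z) ∘ φ⁻¹`, `ι₂(z) = φ² ∘ Φ(z) ∘ φ⁻²`, `ι₃(z) = Φ(z)`
(indexed here by `j = 0, 1, 2` respectively; note `φ⁻¹ = φ²`). -/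
def iot (δ : Z → Z) (i : F) (j : Fin 3) (z : Z × Z) : J Z → J Z :=
  if j = 0 then phiMap F i ∘ Phi F δ i z ∘ (phiMap F i ∘ phiMap F i)
  else if j = 1 then (phiMap F i ∘ phiMap F i) ∘ Phi F δ i z ∘ phiMap F i
  else Phi F δ i z

/-- The embedding `K = Z ⊕ Zx ⊆ J`. -/
def kap : Z × Z → J Z :=
  fun p => (fun j => if j = 0 then p.1 else 0, fun j => if j = 0 then p.2 else 0)

/-- The projection `J → K` onto the `Z ⊕ Zx` coordinates. -/
def pik : J Z → Z × Z := fun u => (u.1 0, u.2 0)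

end CKJ

section Aux

open CKJ

variable {F : Type*} [Field F] {Z : Type*} [CommRing Z] [Algebra F Z]

private lemma kcheck_isKDer0 (δ μ : Derivation F Z Z) (a : Z)
    (hμ : ∀ f, μ (δ f) - δ (μ f) = 2 * a * δ f) :
    IsKDer0 F (⇑δ) (kcheck (⇑μ) a) := by
  refine ⟨⟨?_, ?_⟩, ?_, ?_, ?_⟩
  · intro u v
    simp only [kcheck, Prod.fst_add, Prod.snd_add, map_add, Prod.mk_add_mk, Prod.mk.injEq]
    exact ⟨trivial, by ring⟩
  · intro c u
    refine Prod.ext ?_ ?_ <;>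
      simp [kcheck, Derivation.map_smul, smul_add, mul_smul_comm]
  · intro u h; simp [kcheck, h]
  · intro u h; simp [kcheck, h]
  · intro u v
    have h1 := hμ u.2
    have h2 := hμ v.2
    simp only [kcheck, kmul, Prod.mk_add_mk, Prod.mk.injEq, map_add, map_sub,
      Derivation.leibniz, smul_eq_mul]
    constructor
    · linear_combination v.2 * h1 - u.2 * h2
    · ring

private lemma kder0_odd (δ : Derivation F Z Z) (d : Z × Z → Z × Z)
    (hd : IsKDer0 F (⇑δ) d) (g : Z) :
    d ((0 : Z), g) = ((0 : Z), (d (g, (0:Z))).1 + g * (d ((0:Z), (1:Z))).2) := by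
  obtain ⟨⟨hadd, hsmul⟩, he, ho, hder⟩ := hd
  have h0 : kmul (⇑δ) ((g : Z), (0:Z)) ((0:Z), (1:Z)) = ((0:Z), g) := by
    simp [kmul]
  have hg : d ((g:Z), (0:Z)) = ((d ((g:Z), (0:Z))).1, (0:Z)) :=
    Prod.ext rfl (he (g, 0) rfl)
  have h1 : d ((0:Z), (1:Z)) = ((0:Z), (d ((0:Z), (1:Z))).2) :=
    Prod.ext (ho (0, 1) rfl) rfl
  have key := hder ((g:Z), (0:Z)) ((0:Z), (1:Z))
  rw [h0, hg, h1] at key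
  rw [key]
  simp [kmul, mul_comm]

end Aux

open CKJ
theorem stmt4 {F : Type*} [Field F] (h2 : (2 : F) ≠ 0) {Z : Type*} [CommRing Z] [Algebra F Z]
    (δ : Derivation F Z Z)
    (hspan : Submodule.span F {z : Z | ∃ f g : Z, z = f * δ g} = ⊤) :
    -- `μ̌ = kcheck μ a` is the unique even derivation of `K = Z ⊕ Zx`
    -- restricting to `μ` on `Z` and sending `x` to `ax`
    (∀ (μ : Derivation F Z Z) (a : Z), (∀ f, μ (δ f) - δ (μ f) = 2 * a * δ f) →
      (IsKDer0 F (⇑δ) (kcheck (⇑μ) a) ∧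
       (∀ f : Z, kcheck (⇑μ) a (f, 0) = (μ f, 0)) ∧
       kcheck (⇑μ) a ((0 : Z), (1 : Z)) = ((0 : Z), a) ∧
       ∀ d : Z × Z → Z × Z, IsKDer0 F (⇑δ) d → (∀ f : Z, d (f, 0) = (μ f, 0)) →
         d ((0 : Z), (1 : Z)) = ((0 : Z), a) → d = kcheck (⇑μ) a)) ∧
    -- conversely, every even derivation of `K` is of this form
    (∀ d : Z × Z → Z × Z, IsKDer0 F (⇑δ) d →
      ∃ (μ : Derivation F Z Z) (a : Z), (∀ f, μ (δ f) - δ (μ f) = 2 * a * δ f) ∧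
        d = kcheck (⇑μ) a) ∧
    -- the assignment `μ ↦ μ̌` is injective
    (∀ (μ ν : Derivation F Z Z) (a b : Z),
      kcheck (⇑μ) a = kcheck (⇑ν) b → μ = ν ∧ a = b) ∧
    -- it is linear
    (∀ (μ ν : Derivation F Z Z) (a b : Z),
      kcheck (fun f => μ f + ν f) (a + b) = kcheck (⇑μ) a + kcheck (⇑ν) b) ∧
    (∀ (c : F) (μ : Derivation F Z Z) (a : Z),
      kcheck (fun f => c • μ f) (c • a) = c • kcheck (⇑μ) a) ∧
    -- and it preserves the Lie bracket
    (∀ (μ ν : Derivation F Z Z) (a b : Z),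
      (∀ f, μ (δ f) - δ (μ f) = 2 * a * δ f) → (∀ f, ν (δ f) - δ (ν f) = 2 * b * δ f) →
      kcheck (⇑μ) a ∘ kcheck (⇑ν) b - kcheck (⇑ν) b ∘ kcheck (⇑μ) a
        = kcheck (fun f => μ (ν f) - ν (μ f)) (μ b - ν a)) := by
  refine ⟨?_, ?_, ?_, ?_, ?_, ?_⟩
  · intro μ a hμ
    refine ⟨kcheck_isKDer0 δ μ a hμ, fun f => by simp [kcheck], by simp [kcheck], ?_⟩
    intro d hd hres hx
    funext u
    have hodd := kder0_odd δ d hd u.2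
    rw [hres u.2, hx] at hodd
    have hu : (u : Z × Z) = (u.1, (0:Z)) + ((0:Z), u.2) := by simp
    calc d u = d ((u.1, (0:Z)) + ((0:Z), u.2)) := by rw [← hu]
      _ = d (u.1, (0:Z)) + d ((0:Z), u.2) := hd.1.1 _ _
      _ = kcheck (⇑μ) a u := by
          rw [hres, hodd]
          simp only [kcheck, Prod.mk_add_mk, Prod.mk.injEq]
          exact ⟨by ring, by ring⟩
  · intro d hd
    have hadd := hd.1.1
    have he := hd.2.1
    have ho := hd.2.2.1
    have hder := hd.2.2.2
    have hfe : ∀ f : Z, d (f, (0:Z)) = ((d (f, (0:Z))).1, (0:Z)) :=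
      fun f => Prod.ext rfl (he (f, 0) rfl)
    have hx : d ((0:Z), (1:Z)) = ((0:Z), (d ((0:Z), (1:Z))).2) :=
      Prod.ext (ho (0, 1) rfl) rfl
    have haddm : ∀ f g : Z, (d ((f + g : Z), (0:Z))).1
        = (d (f, (0:Z))).1 + (d (g, (0:Z))).1 := by
      intro f g
      have h : ((f + g : Z), (0:Z)) = ((f : Z), (0:Z)) + ((g : Z), (0:Z)) := by simp
      rw [h, hadd, Prod.fst_add]
    have hsm : ∀ (c : F) (f : Z), (d ((c • f : Z), (0:Z))).1 = c • (d (f, (0:Z))).1 := by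
      intro c f
      have h : ((c • f : Z), (0:Z)) = c • ((f : Z), (0:Z)) := by simp
      rw [h, hd.1.2, Prod.smul_fst]
    have hmul : ∀ f g : Z, (d ((f * g : Z), (0:Z))).1
        = f * (d (g, (0:Z))).1 + g * (d (f, (0:Z))).1 := by
      intro f g
      have h0 : kmul (⇑δ) ((f : Z), (0:Z)) ((g : Z), (0:Z)) = ((f * g : Z), (0:Z)) := by
        simp [kmul]
      have key := hder ((f : Z), (0:Z)) ((g : Z), (0:Z))
      rw [h0, hfe f, hfe g] at key
      have key1 := congrArg Prod.fst key
      simp only [kmul, Prod.fst_add] at key1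
      rw [key1]; ring
    set μ : Derivation F Z Z := Derivation.mk'
      ⟨⟨fun f => (d (f, (0:Z))).1, haddm⟩, hsm⟩
      (fun f g => by simpa [smul_eq_mul] using hmul f g) with hμdef
    set a : Z := (d ((0:Z), (1:Z))).2 with hadef
    have hμf : ∀ f : Z, μ f = (d (f, (0:Z))).1 := fun f => rfl
    have hodd : ∀ g : Z, d ((0:Z), g) = ((0:Z), (d (g, (0:Z))).1 + g * a) :=
      fun g => kder0_odd δ d hd g
    have hcomm : ∀ f : Z, μ (δ f) - δ (μ f) = 2 * a * δ f := by
      intro f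
      have h0 : kmul (⇑δ) ((0:Z), f) ((0:Z), (1:Z)) = ((δ f : Z), (0:Z)) := by
        simp [kmul]
      have key := hder ((0:Z), f) ((0:Z), (1:Z))
      rw [h0, hodd f, hx] at key
      have key1 := congrArg Prod.fst key
      simp only [kmul, Prod.fst_add, map_add, Derivation.map_one_eq_zero,
        Derivation.leibniz, smul_eq_mul, mul_zero, mul_one, zero_mul, sub_zero,
        add_zero, zero_add] at key1
      rw [hμf (δ f), hμf f, key1]
      ring
    refine ⟨μ, a, hcomm, ?_⟩
    funext u
    have hu : (u : Z × Z) = (u.1, (0:Z)) + ((0:Z), u.2) := by simp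
    calc d u = d ((u.1, (0:Z)) + ((0:Z), u.2)) := by rw [← hu]
      _ = d (u.1, (0:Z)) + d ((0:Z), u.2) := hadd _ _
      _ = kcheck (⇑μ) a u := by
          rw [hfe, hodd]
          simp only [kcheck, Prod.mk_add_mk, Prod.mk.injEq, hμf]
          exact ⟨by ring, by ring⟩
  · intro μ ν a b h
    have h1 : ∀ f : Z, μ f = ν f := by
      intro f
      have := congrArg Prod.fst (congrFun h (f, (0:Z)))
      simpa [kcheck] using this
    refine ⟨by ext f; exact h1 f, ?_⟩
    have := congrArg Prod.snd (congrFun h ((0:Z), (1:Z)))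
    simpa [kcheck] using this
  · intro μ ν a b
    funext u
    simp only [kcheck, Pi.add_apply, Prod.mk_add_mk, Prod.mk.injEq]
    exact ⟨trivial, by ring⟩
  · intro c μ a
    funext u
    refine Prod.ext ?_ ?_ <;>
      simp [kcheck, smul_add, smul_mul_assoc]
  · intro μ ν a b hμ hν
    funext u
    simp only [kcheck, Function.comp_apply, Pi.sub_apply, Function.comp, map_add,
      map_sub, Derivation.leibniz, smul_eq_mul, Prod.mk_sub_mk, Prod.mk.injEq]
    exact ⟨trivial, by ring⟩
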